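/- Let f : ℝ → ℝ be continuous with f(x+1) = f(x) + d for all x ∈ ℝ, d an integer, and let y ∈ ℝ. Suppose the fiber F = {x ∈ [0,1) : f(x) − y ∈ ℤ} is finite and that f is differentiable at each point x ∈ F with deriv f x ≠ 0. Then the cardinality of F is congruent to d modulo 2. -/

import Mathlib

open Filter Topology

-- Lemma C: no integer crossing on [a,b] implies floor constant
lemma floor_const_aux (f : ℝ → ℝ) (y : ℝ) (hf : Continuous f) {a b : ℝ} (hab : a ≤ b)
    (h : ∀ x ∈ Set.Icc a b, ¬ ∃ k : ℤ, f x - y = k) :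
    ⌊f a - y⌋ = ⌊f b - y⌋ := by
  by_contra hne
  have hcont : ContinuousOn (fun x => f x - y) (Set.Icc a b) :=
    (hf.sub continuous_const).continuousOn
  rcases lt_or_gt_of_ne hne with hlt | hlt
  · have h1 : f a - y < ((⌊f a - y⌋ + 1 : ℤ) : ℝ) := by
      push_cast; exact Int.lt_floor_add_one _
    have h2 : ((⌊f a - y⌋ + 1 : ℤ) : ℝ) ≤ f b - y := by
      have h3 : ((⌊f a - y⌋ + 1 : ℤ) : ℝ) ≤ ((⌊f b - y⌋ : ℤ) : ℝ) := by exact_mod_cast hlt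
      exact h3.trans (Int.floor_le _)
    obtain ⟨x, hx, hgx⟩ := intermediate_value_Icc hab hcont ⟨h1.le, h2⟩
    exact h x hx ⟨_, hgx⟩
  · have h1 : f b - y < ((⌊f b - y⌋ + 1 : ℤ) : ℝ) := by
      push_cast; exact Int.lt_floor_add_one _
    have h2 : ((⌊f b - y⌋ + 1 : ℤ) : ℝ) ≤ f a - y := by
      have h3 : ((⌊f b - y⌋ + 1 : ℤ) : ℝ) ≤ ((⌊f a - y⌋ : ℤ) : ℝ) := by exact_mod_cast hlt
      exact h3.trans (Int.floor_le _)
    obtain ⟨x, hx, hgx⟩ := intermediate_value_Icc' hab hcont ⟨h1.le, h2⟩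
    exact h x hx ⟨_, hgx⟩

-- Lemma B: transversal crossing gives odd jump in floor
lemma jump_aux (f : ℝ → ℝ) (y x₀ : ℝ) (k : ℤ) (hk : f x₀ - y = k)
    (hd : DifferentiableAt ℝ f x₀) (h0 : deriv f x₀ ≠ 0) :
    ∃ δ > 0, ∀ x₁ ∈ Set.Ioo (x₀ - δ) x₀, ∀ x₂ ∈ Set.Ioo x₀ (x₀ + δ),
      ⌊f x₁ - y⌋ + ⌊f x₂ - y⌋ = 2 * k - 1 := by
  have hD := hd.hasDerivAt
  have hslope := hasDerivAt_iff_tendsto_slope.mp hD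
  have h1 : ∀ᶠ x in 𝓝 x₀, |f x - f x₀| < 1 := by
    have : Filter.Tendsto (fun x => |f x - f x₀|) (𝓝 x₀) (𝓝 |f x₀ - f x₀|) :=
      ((hd.continuousAt.sub tendsto_const_nhds).abs)
    simp only [sub_self, abs_zero] at this
    exact this.eventually_lt_const one_pos
  rcases h0.lt_or_gt with hc | hc
  · -- deriv < 0
    have h2 : ∀ᶠ x in 𝓝[≠] x₀, slope f x₀ x < 0 :=
      hslope.eventually_lt_const hc
    have h3 : ∀ᶠ x in 𝓝[≠] x₀, slope f x₀ x < 0 ∧ |f x - f x₀| < 1 :=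
      h2.and (h1.filter_mono nhdsWithin_le_nhds)
    rw [eventually_nhdsWithin_iff] at h3
    obtain ⟨δ, hδ, hP⟩ := Metric.eventually_nhds_iff.mp h3
    refine ⟨δ, hδ, ?_⟩
    rintro x₁ ⟨hx₁1, hx₁2⟩ x₂ ⟨hx₂1, hx₂2⟩
    have hd₁ : dist x₁ x₀ < δ := by rw [Real.dist_eq, abs_lt]; constructor <;> linarith
    have hd₂ : dist x₂ x₀ < δ := by rw [Real.dist_eq, abs_lt]; constructor <;> linarith
    obtain ⟨hs₁, ha₁⟩ := hP hd₁ (by exact ne_of_lt hx₁2)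
    obtain ⟨hs₂, ha₂⟩ := hP hd₂ (by exact ne_of_gt hx₂1)
    rw [slope_def_field, div_neg_iff] at hs₁ hs₂
    have hf₁ : 0 < f x₁ - f x₀ := by
      rcases hs₁ with ⟨h, h'⟩ | ⟨h, h'⟩ <;> nlinarith
    have hf₂ : f x₂ - f x₀ < 0 := by
      rcases hs₂ with ⟨h, h'⟩ | ⟨h, h'⟩ <;> nlinarith
    rw [abs_lt] at ha₁ ha₂
    have hfl₁ : ⌊f x₁ - y⌋ = k := by
      rw [Int.floor_eq_iff]
      constructor <;> push_cast <;> [linarith [hk] ; linarith [hk, ha₁.2]]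
    have hfl₂ : ⌊f x₂ - y⌋ = k - 1 := by
      rw [Int.floor_eq_iff]
      constructor <;> push_cast <;> [linarith [hk, ha₂.1] ; linarith [hk]]
    omega
  · -- deriv > 0
    have h2 : ∀ᶠ x in 𝓝[≠] x₀, 0 < slope f x₀ x :=
      hslope.eventually_const_lt hc
    have h3 : ∀ᶠ x in 𝓝[≠] x₀, 0 < slope f x₀ x ∧ |f x - f x₀| < 1 :=
      h2.and (h1.filter_mono nhdsWithin_le_nhds)
    rw [eventually_nhdsWithin_iff] at h3
    obtain ⟨δ, hδ, hP⟩ := Metric.eventually_nhds_iff.mp h3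
    refine ⟨δ, hδ, ?_⟩
    rintro x₁ ⟨hx₁1, hx₁2⟩ x₂ ⟨hx₂1, hx₂2⟩
    have hd₁ : dist x₁ x₀ < δ := by rw [Real.dist_eq, abs_lt]; constructor <;> linarith
    have hd₂ : dist x₂ x₀ < δ := by rw [Real.dist_eq, abs_lt]; constructor <;> linarith
    obtain ⟨hs₁, ha₁⟩ := hP hd₁ (by exact ne_of_lt hx₁2)
    obtain ⟨hs₂, ha₂⟩ := hP hd₂ (by exact ne_of_gt hx₂1)
    rw [slope_def_field, div_pos_iff] at hs₁ hs₂
    have hf₁ : f x₁ - f x₀ < 0 := by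
      rcases hs₁ with ⟨h, h'⟩ | ⟨h, h'⟩ <;> nlinarith
    have hf₂ : 0 < f x₂ - f x₀ := by
      rcases hs₂ with ⟨h, h'⟩ | ⟨h, h'⟩ <;> nlinarith
    rw [abs_lt] at ha₁ ha₂
    have hfl₁ : ⌊f x₁ - y⌋ = k - 1 := by
      rw [Int.floor_eq_iff]
      constructor <;> push_cast <;> [linarith [hk, ha₁.1] ; linarith [hk]]
    have hfl₂ : ⌊f x₂ - y⌋ = k := by
      rw [Int.floor_eq_iff]
      constructor <;> push_cast <;> [linarith [hk] ; linarith [hk, ha₂.2]]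
    omega

-- Key induction lemma
lemma key_aux (f : ℝ → ℝ) (y : ℝ) (hf : Continuous f)
    (hreg : ∀ x : ℝ, (∃ k : ℤ, f x - y = k) → DifferentiableAt ℝ f x ∧ deriv f x ≠ 0) :
    ∀ (n : ℕ) (a b : ℝ), a < b → (¬ ∃ k : ℤ, f a - y = k) → (¬ ∃ k : ℤ, f b - y = k) →
      ∀ (hfin : {x | x ∈ Set.Ioo a b ∧ ∃ k : ℤ, f x - y = (k : ℝ)}.Finite),
      hfin.toFinset.card = n →
      (⌊f b - y⌋ - ⌊f a - y⌋) % 2 = (n : ℤ) % 2 := by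
  intro n
  induction n with
  | zero =>
    intro a b hab haS hbS hfin hcard
    have hempty : {x | x ∈ Set.Ioo a b ∧ ∃ k : ℤ, f x - y = (k : ℝ)} = ∅ := by
      rw [← Set.Finite.coe_toFinset hfin, Finset.card_eq_zero.mp hcard]
      simp
    have hfc : ⌊f a - y⌋ = ⌊f b - y⌋ := by
      apply floor_const_aux f y hf hab.le
      intro x hx hk
      rcases eq_or_lt_of_le hx.1 with rfl | h1
      · exact haS hk
      rcases eq_or_lt_of_le hx.2 with rfl | h2
      · exact hbS hk
      exact absurd (Set.mem_setOf_eq ▸ hempty ▸ (⟨⟨h1, h2⟩, hk⟩ :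
        x ∈ {x | x ∈ Set.Ioo a b ∧ ∃ k : ℤ, f x - y = (k : ℝ)})) (Set.notMem_empty x)
    omega
  | succ n ih =>
    intro a b hab haS hbS hfin hcard
    set T := hfin.toFinset with hT
    have hne : T.Nonempty := Finset.card_pos.mp (by omega)
    set x₀ := T.max' hne with hx₀def
    have hx₀ : x₀ ∈ {x | x ∈ Set.Ioo a b ∧ ∃ k : ℤ, f x - y = (k : ℝ)} :=
      hfin.mem_toFinset.mp (T.max'_mem hne)
    obtain ⟨hx₀I, k, hk⟩ := hx₀
    obtain ⟨hdif, h0⟩ := hreg x₀ ⟨k, hk⟩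
    obtain ⟨δ, hδ, hjump⟩ := jump_aux f y x₀ k hk hdif h0
    set T' := T.erase x₀ with hT'def
    have hT' : T'.card = n := by
      rw [hT'def, Finset.card_erase_of_mem (T.max'_mem hne), hcard]
      omega
    set M := max a (x₀ - δ) with hM
    set L := (insert M T').max' (Finset.insert_nonempty _ _) with hL
    have hML : M ≤ L := Finset.le_max' _ _ (Finset.mem_insert_self _ _)
    have hLlt : L < x₀ := by
      rw [hL, Finset.max'_lt_iff]
      intro t ht
      rcases Finset.mem_insert.mp ht with rfl | ht
      · exact max_lt hx₀I.1 (by linarith)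
      · exact lt_of_le_of_ne (Finset.le_max' T t (Finset.mem_of_mem_erase ht))
          (Finset.ne_of_mem_erase ht)
    have htL : ∀ t ∈ T', t ≤ L := fun t ht => Finset.le_max' _ _ (Finset.mem_insert_of_mem ht)
    set x₁ := (L + x₀) / 2 with hx₁def
    have hx₁L : L < x₁ := by rw [hx₁def]; linarith
    have hx₁lt : x₁ < x₀ := by rw [hx₁def]; linarith
    have hax₁ : a < x₁ := lt_of_le_of_lt (le_trans (le_max_left _ _) hML) hx₁L
    have hδx₁ : x₀ - δ < x₁ := lt_of_le_of_lt (le_trans (le_max_right _ _) hML) hx₁L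
    have hx₁b : x₁ < b := hx₁lt.trans hx₀I.2
    have hx₁S : ¬ ∃ k : ℤ, f x₁ - y = (k : ℝ) := by
      rintro hk1
      have hmem : x₁ ∈ T := hfin.mem_toFinset.mpr ⟨⟨hax₁, hx₁b⟩, hk1⟩
      have : x₁ ∈ T' := Finset.mem_erase.mpr ⟨ne_of_lt hx₁lt, hmem⟩
      linarith [htL x₁ this]
    have hsub : {x | x ∈ Set.Ioo a x₁ ∧ ∃ k : ℤ, f x - y = (k : ℝ)} = (↑T' : Set ℝ) := by
      ext t
      simp only [Set.mem_setOf_eq, Finset.coe_erase, Set.mem_diff, Finset.mem_coe]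
      constructor
      · rintro ⟨⟨h1, h2⟩, hk'⟩
        refine Finset.mem_erase.mpr ⟨ne_of_lt (h2.trans hx₁lt), ?_⟩
        exact hfin.mem_toFinset.mpr ⟨⟨h1, h2.trans hx₁b⟩, hk'⟩
      · intro ht
        obtain ⟨hne', htT⟩ := Finset.mem_erase.mp ht
        obtain ⟨⟨h1, h2⟩, hk'⟩ := hfin.mem_toFinset.mp htT
        exact ⟨⟨h1, lt_of_le_of_lt (htL t ht) hx₁L⟩, hk'⟩
    have hfin' : {x | x ∈ Set.Ioo a x₁ ∧ ∃ k : ℤ, f x - y = (k : ℝ)}.Finite := by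
      rw [hsub]; exact T'.finite_toSet
    have hc' : hfin'.toFinset.card = n := by
      have : hfin'.toFinset = T' :=
        Finset.coe_injective (by rw [Set.Finite.coe_toFinset, hsub])
      rw [this, hT']
    have IH := ih a x₁ hax₁ haS hx₁S hfin' hc'
    set m := min b (x₀ + δ) with hm
    have hx₀m : x₀ < m := lt_min hx₀I.2 (by linarith)
    set x₂ := (x₀ + m) / 2 with hx₂def
    have hx₂1 : x₀ < x₂ := by rw [hx₂def]; linarith
    have hx₂m : x₂ < m := by rw [hx₂def]; linarith
    have hx₂b : x₂ < b := lt_of_lt_of_le hx₂m (min_le_left _ _)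
    have hx₂δ : x₂ < x₀ + δ := lt_of_lt_of_le hx₂m (min_le_right _ _)
    have hjmp := hjump x₁ ⟨hδx₁, hx₁lt⟩ x₂ ⟨hx₂1, hx₂δ⟩
    have hnoc : ∀ x ∈ Set.Icc x₂ b, ¬ ∃ k : ℤ, f x - y = (k : ℝ) := by
      rintro x ⟨hxa, hxb⟩ hkx
      rcases eq_or_lt_of_le hxb with rfl | hxb'
      · exact hbS hkx
      have hmem : x ∈ T := hfin.mem_toFinset.mpr
        ⟨⟨lt_of_lt_of_le (hx₀I.1.trans hx₂1) hxa, hxb'⟩, hkx⟩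
      have := Finset.le_max' T x hmem
      linarith
    have hfc : ⌊f x₂ - y⌋ = ⌊f b - y⌋ := floor_const_aux f y hf hx₂b.le hnoc
    push_cast
    omega

theorem card_regular_fiber_parity (f : ℝ → ℝ) (d : ℤ)
    (hf : Continuous f) (hper : ∀ x, f (x + 1) = f x + d) (y : ℝ)
    (hF : {x | x ∈ Set.Ico (0 : ℝ) 1 ∧ ∃ k : ℤ, f x - y = k}.Finite)
    (hreg : ∀ x ∈ {x | x ∈ Set.Ico (0 : ℝ) 1 ∧ ∃ k : ℤ, f x - y = k},
      DifferentiableAt ℝ f x ∧ deriv f x ≠ 0) :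
    (hF.toFinset.card : ℤ) % 2 = d % 2 := by
  -- periodicity for all integers
  have hper' : ∀ (x : ℝ) (n : ℤ), f (x + n) = f x + n * d := by
    intro x n
    induction n using Int.induction_on with
    | zero => simp
    | succ n ihn =>
      have h1 : f (x + n + 1) = f (x + n) + d := hper (x + (n : ℝ))
      push_cast at ihn ⊢
      rw [show x + ((n : ℝ) + 1) = x + n + 1 by ring, h1, ihn]; ring
    | pred n ihn =>
      have h1 : f (x + (-(n : ℝ) - 1) + 1) = f (x + (-(n : ℝ) - 1)) + d :=
        hper (x + (-(n : ℝ) - 1))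
      push_cast at ihn ⊢
      rw [show x + (-(n : ℝ) - 1) + 1 = x + -(n : ℝ) by ring] at h1
      have h2 : (-(n : ℝ) - 1) * d = -(n:ℝ) * d - d := by ring
      rw [show f x + (-(n : ℝ) - 1) * (d:ℝ) = f x + (-(n:ℝ) * d - d) by rw [h2]]
      linarith
  -- regularity on all crossings
  have hregS : ∀ x : ℝ, (∃ k : ℤ, f x - y = (k : ℝ)) →
      DifferentiableAt ℝ f x ∧ deriv f x ≠ 0 := by
    rintro x ⟨k, hk⟩
    set n := ⌊x⌋ with hn
    set x₀ := x - (n : ℝ) with hx₀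
    have hx₀I : x₀ ∈ Set.Ico (0 : ℝ) 1 := by
      constructor
      · rw [hx₀]; linarith [Int.floor_le x]
      · rw [hx₀]; linarith [Int.lt_floor_add_one x]
    have hfx : f x = f x₀ + (n : ℝ) * d := by
      have := hper' x₀ n
      rw [hx₀, sub_add_cancel] at this
      exact this
    have hfx₀ : f x₀ - y = ((k - n * d : ℤ) : ℝ) := by
      push_cast; rw [← hk, hfx]; ring
    obtain ⟨hdif, h0⟩ := hreg x₀ ⟨hx₀I, k - n * d, hfx₀⟩
    have hD := hdif.hasDerivAt
    have hinner : HasDerivAt (fun t : ℝ => t - (n : ℝ)) 1 x := (hasDerivAt_id x).sub_const _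
    have hcomp : HasDerivAt (fun t => f (t - (n : ℝ))) (deriv f x₀ * 1) x :=
      HasDerivAt.comp x (hx₀ ▸ hD) hinner
    have hadd := hcomp.add_const ((n : ℝ) * d)
    have hfun : (fun t => f (t - (n : ℝ)) + (n : ℝ) * d) = f := by
      funext t
      have := hper' (t - (n : ℝ)) n
      rw [sub_add_cancel] at this
      linarith
    rw [hfun] at hadd
    refine ⟨hadd.differentiableAt, ?_⟩
    rw [hadd.deriv]
    simpa using h0
  -- pick a base point not in the fiber
  have hinf : (Set.Ico (0 : ℝ) 1).Infinite := Set.Ico_infinite zero_lt_one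
  obtain ⟨a, ha⟩ := (hinf.diff hF).nonempty
  obtain ⟨ha01, haF⟩ := ha
  have haS : ¬ ∃ k : ℤ, f a - y = (k : ℝ) := fun h => haF ⟨ha01, h⟩
  have ha1S : ¬ ∃ k : ℤ, f (a + 1) - y = (k : ℝ) := by
    rintro ⟨k, hk⟩
    exact haS ⟨k - d, by push_cast; rw [hper] at hk; linarith⟩
  have hfin : {x | x ∈ Set.Ioo a (a + 1) ∧ ∃ k : ℤ, f x - y = (k : ℝ)}.Finite := by
    apply Set.Finite.subset ((hF.image (· + 1)).union hF)
    rintro s ⟨⟨hs1, hs2⟩, k, hks⟩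
    by_cases h1 : s < 1
    · right
      exact ⟨⟨le_of_lt (lt_of_le_of_lt ha01.1 hs1), h1⟩, k, hks⟩
    · left
      refine ⟨s - 1, ⟨⟨by linarith, by linarith [ha01.2]⟩, k - d, ?_⟩, by ring⟩
      have := hper (s - 1)
      rw [sub_add_cancel] at this
      push_cast
      rw [this] at hks
      linarith
  have hcard : hfin.toFinset.card = hF.toFinset.card := by
    refine Finset.card_bij' (fun s _ => if 1 ≤ s then s - 1 else s)
      (fun x _ => if x < a then x + 1 else x) ?_ ?_ ?_ ?_
    · intro s hs
      obtain ⟨⟨hs1, hs2⟩, k, hks⟩ := hfin.mem_toFinset.mp hs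
      by_cases h1 : 1 ≤ s
      · simp only [if_pos h1]
        refine hF.mem_toFinset.mpr ⟨⟨by linarith, by linarith [ha01.2]⟩, k - d, ?_⟩
        have := hper (s - 1)
        rw [sub_add_cancel] at this
        push_cast
        rw [this] at hks
        linarith
      · simp only [if_neg h1]
        exact hF.mem_toFinset.mpr ⟨⟨le_of_lt (lt_of_le_of_lt ha01.1 hs1), not_le.mp h1⟩, k, hks⟩
    · intro x hx
      obtain ⟨⟨hx1, hx2⟩, k, hkx⟩ := hF.mem_toFinset.mp hx
      have hxa : x ≠ a := fun h => haF (h ▸ ⟨⟨hx1, hx2⟩, k, hkx⟩)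
      by_cases h1 : x < a
      · simp only [if_pos h1]
        refine hfin.mem_toFinset.mpr ⟨⟨by linarith [ha01.2], by linarith⟩, k + d, ?_⟩
        push_cast
        rw [hper]
        linarith
      · simp only [if_neg h1]
        exact hfin.mem_toFinset.mpr
          ⟨⟨lt_of_le_of_ne (not_lt.mp h1) (Ne.symm hxa), by linarith [ha01.1]⟩, k, hkx⟩
    · intro s hs
      obtain ⟨⟨hs1, hs2⟩, _⟩ := hfin.mem_toFinset.mp hs
      by_cases h1 : 1 ≤ s
      · simp only [if_pos h1]
        rw [if_pos (by linarith [ha01.2] : s - 1 < a)]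
        ring
      · simp only [if_neg h1]
        rw [if_neg (not_lt.mpr hs1.le)]
    · intro x hx
      obtain ⟨⟨hx1, hx2⟩, _⟩ := hF.mem_toFinset.mp hx
      by_cases h1 : x < a
      · simp only [if_pos h1]
        rw [if_pos (by linarith : (1:ℝ) ≤ x + 1)]
        ring
      · simp only [if_neg h1]
        rw [if_neg (by linarith : ¬ (1:ℝ) ≤ x)]
  have hkey := key_aux f y hf hregS hF.toFinset.card a (a + 1) (by linarith) haS ha1S hfin hcard
  have hfloor : ⌊f (a + 1) - y⌋ = ⌊f a - y⌋ + d := by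
    have h1 : f (a + 1) - y = (f a - y) + (d : ℝ) := by rw [hper]; ring
    rw [h1, Int.floor_add_intCast]
  omega
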